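/- Low frequency bound on wavelet invariant derivatives: if Pψ = |ψ̂|² is C^m and f ∈ L¹(ℝ), then for all λ > 0, |λ^m (Sf)^{(m)}(λ)| ≤ Ψ_m ‖f‖₁², where Ψ_m = (1/2π) Σ_{i=0}^m C(m,i)·(m!/i!)·‖ω^i (Pψ)^{(i)}(ω)‖₁. -/

import Mathlib

open MeasureTheory Complex

noncomputable section

/-- Fourier transform `f̂(ω) = ∫ f(x) e^{-i x ω} dx`. -/
def fourierT (f : ℝ → ℂ) (ω : ℝ) : ℂ :=
  ∫ x : ℝ, f x * Complex.exp (-(Complex.I * (x : ℂ) * (ω : ℂ)))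

/-- Power spectrum `(Pψ)(ω) = |ψ̂(ω)|²`. -/
def powerSpec (ψ : ℝ → ℂ) (ω : ℝ) : ℝ := ‖fourierT ψ ω‖ ^ 2


def cc (m i : ℕ) : ℝ := (m.choose i : ℝ) * (m.factorial : ℝ) / (i.factorial : ℝ)

lemma cc_nonneg (m i : ℕ) : 0 ≤ cc m i := by
  unfold cc; positivity

lemma cc_top (m : ℕ) : cc m (m + 1) = 0 := by
  unfold cc; simp [Nat.choose_eq_zero_of_lt]

lemma choose_ident (m i : ℕ) :
    (m + 2 + i) * m.choose (i+1) + (i+1) * m.choose i = (m+1) * (m+1).choose (i+1) := by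
  rcases le_or_gt i m with h | h
  · have h1 : m.choose (i+1) * (i+1) = m.choose i * (m - i) := Nat.choose_succ_right_eq m i
    have h2 : (m+1).choose (i+1) = m.choose i + m.choose (i+1) := Nat.choose_succ_succ m i
    have h3 : m - i + (i + 1) = m + 1 := by omega
    nlinarith [h1, h2, h3, Nat.sub_add_cancel h]
  · rcases Nat.lt_or_ge i (m+1) with h' | h'
    ·
      omega
    · have e1 : m.choose (i+1) = 0 := Nat.choose_eq_zero_of_lt (by omega)
      have e2 : m.choose i = 0 := Nat.choose_eq_zero_of_lt h
      have e3 : (m+1).choose (i+1) = 0 := Nat.choose_eq_zero_of_lt (by omega)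
      simp [e1, e2, e3]

lemma cc_rec (m i : ℕ) : cc (m+1) (i+1) = ((m:ℝ) + 2 + i) * cc m (i+1) + cc m i := by
  have h := choose_ident m i
  have h' : ((m:ℝ) + 2 + i) * m.choose (i+1) + (i+1) * m.choose i = (m+1) * (m+1).choose (i+1) := by
    exact_mod_cast congrArg (Nat.cast : ℕ → ℝ) h
  unfold cc
  have hi : ((i.factorial : ℝ)) ≠ 0 := by exact_mod_cast i.factorial_ne_zero
  have hi1 : (((i+1).factorial : ℝ)) ≠ 0 := by exact_mod_cast (i+1).factorial_ne_zero
  rw [Nat.factorial_succ i, Nat.factorial_succ m]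
  push_cast
  field_simp
  linear_combination (-1:ℝ) * h'

lemma cc_zero (m : ℕ) : cc (m+1) 0 = ((m:ℝ)+1) * cc m 0 := by
  unfold cc
  rw [Nat.factorial_succ m]
  simp [Nat.choose_zero_right, Nat.factorial_zero]

lemma sum_step (n : ℕ) (B : ℕ → ℝ) :
    ∑ i ∈ Finset.range (n+1), (((n:ℝ)+1+i) * cc n i * B i + cc n i * B (i+1))
      = ∑ i ∈ Finset.range (n+2), cc (n+1) i * B i := by
  have hR : ∑ i ∈ Finset.range (n+2), cc (n+1) i * B i
      = ∑ i ∈ Finset.range (n+1), ((((n:ℝ)+2+i) * cc n (i+1) + cc n i) * B (i+1))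
        + ((n:ℝ)+1) * cc n 0 * B 0 := by
    have hrec : ∀ i ∈ Finset.range (n+1), cc (n+1) (i+1) * B (i+1)
        = ((((n:ℝ)+2+i) * cc n (i+1) + cc n i)) * B (i+1) := fun i _ => by rw [cc_rec]
    rw [Finset.sum_range_succ' (fun i => cc (n+1) i * B i) (n+1),
        Finset.sum_congr rfl hrec, cc_zero]
  have hL1 : ∑ i ∈ Finset.range (n+1), ((n:ℝ)+1+i) * cc n i * B i
      = ∑ i ∈ Finset.range (n+1), (((n:ℝ)+2+i) * cc n (i+1) * B (i+1))
        + ((n:ℝ)+1) * cc n 0 * B 0 := by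
    rw [Finset.sum_range_succ' (fun i => ((n:ℝ)+1+i) * cc n i * B i) n,
        Finset.sum_range_succ (fun i => ((n:ℝ)+2+i) * cc n (i+1) * B (i+1)) n,
        cc_top]
    have : ∀ i ∈ Finset.range n, ((n:ℝ)+1+(↑(i+1))) * cc n (i+1) * B (i+1)
        = ((n:ℝ)+2+i) * cc n (i+1) * B (i+1) := fun i _ => by push_cast; ring
    rw [Finset.sum_congr rfl this]
    push_cast; ring
  rw [Finset.sum_add_distrib, hL1, hR]
  have : ∑ i ∈ Finset.range (n+1), ((((n:ℝ)+2+i) * cc n (i+1) + cc n i) * B (i+1))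
      = ∑ i ∈ Finset.range (n+1), (((n:ℝ)+2+i) * cc n (i+1) * B (i+1))
        + ∑ i ∈ Finset.range (n+1), cc n i * B (i+1) := by
    rw [← Finset.sum_add_distrib]
    exact Finset.sum_congr rfl fun i _ => by ring
  rw [this]; ring

lemma key (g : ℝ → ℝ) (ω : ℝ) :
    ∀ n : ℕ, ContDiff ℝ n g → ∀ l : ℝ, 0 < l →
    iteratedDeriv n (fun s : ℝ => s⁻¹ * g (ω / s)) l
      = (-1:ℝ)^n * ∑ i ∈ Finset.range (n+1),
          cc n i * ω^i * l ^ (-((n:ℤ)+1+i)) * iteratedDeriv i g (ω / l) := by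
  intro n
  induction n with
  | zero =>
    intro _ l hl
    simp [cc, zpow_neg]
  | succ n ih =>
    intro hg l hl
    have hg' : ContDiff ℝ n g := by
      apply hg.of_le
      exact_mod_cast Nat.cast_le.mpr (Nat.le_succ n)
    have hev : (iteratedDeriv n fun s : ℝ => s⁻¹ * g (ω / s)) =ᶠ[nhds l]
        (fun s => (-1:ℝ)^n * ∑ i ∈ Finset.range (n+1),
          cc n i * ω^i * s ^ (-((n:ℤ)+1+i)) * iteratedDeriv i g (ω / s)) := by
      filter_upwards [Ioi_mem_nhds hl] with s hs
      exact ih hg' s hs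
    rw [iteratedDeriv_succ, hev.deriv_eq]
    -- derivative of each term
    set D : ℕ → ℝ := fun i =>
      cc n i * ω^i * ((-((n:ℝ)+1+i)) * l ^ (-((n:ℤ)+1+i) - 1)) * iteratedDeriv i g (ω / l)
      + cc n i * ω^i * l ^ (-((n:ℤ)+1+i)) * (iteratedDeriv (i+1) g (ω / l) * (ω * -(l^2)⁻¹))
      with hD
    have hterm : ∀ i ∈ Finset.range (n+1), HasDerivAt
        (fun s : ℝ => cc n i * ω^i * s ^ (-((n:ℤ)+1+i)) * iteratedDeriv i g (ω / s)) (D i) l := by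
      intro i hi
      have hi' : i ≤ n := by simpa using Nat.lt_succ_iff.mp (Finset.mem_range.mp hi)
      have h1 : HasDerivAt (fun s : ℝ => cc n i * ω^i * s ^ (-((n:ℤ)+1+i)))
          (cc n i * ω^i * (((-((n:ℤ)+1+i)) : ℤ) * l ^ (-((n:ℤ)+1+i) - 1))) l :=
        (hasDerivAt_zpow _ l (Or.inl hl.ne')).const_mul _
      have hinner : HasDerivAt (fun s : ℝ => ω / s) (ω * -(l^2)⁻¹) l := by
        simpa [div_eq_mul_inv] using (hasDerivAt_inv hl.ne').const_mul ω
      have hdiff : DifferentiableAt ℝ (iteratedDeriv i g) (ω / l) := by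
        refine (hg.differentiable_iteratedDeriv i ?_) (ω / l)
        exact_mod_cast Nat.cast_lt.mpr (Nat.lt_succ_of_le hi')
      have houter : HasDerivAt (iteratedDeriv i g) (iteratedDeriv (i+1) g (ω / l)) (ω / l) := by
        have := hdiff.hasDerivAt
        rwa [← iteratedDeriv_succ] at this
      have hcomp : HasDerivAt (fun s : ℝ => iteratedDeriv i g (ω / s))
          (iteratedDeriv (i+1) g (ω / l) * (ω * -(l^2)⁻¹)) l := by
        exact houter.comp l hinner
      have := h1.mul hcomp
      rw [hD]
      refine this.congr_deriv ?_
      push_cast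
      ring
    have hS := (HasDerivAt.fun_sum hterm).const_mul ((-1:ℝ)^n)
    rw [hS.deriv]
    -- now algebra
    set B : ℕ → ℝ := fun j => ω^j * l ^ (-((n:ℤ)+2+j)) * iteratedDeriv j g (ω / l) with hB
    have hDi : ∀ i, D i = -((((n:ℝ)+1+i) * cc n i * B i) + cc n i * B (i+1)) := by
      intro i
      rw [hD, hB]
      have e1 : (-((n:ℤ)+1+(i:ℤ)) - 1) = -((n:ℤ)+2+(i:ℤ)) := by ring
      have e2 : l ^ (-((n:ℤ)+1+(i:ℤ))) * (l^2)⁻¹ = l ^ (-((n:ℤ)+2+((i:ℤ)+1))) := by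
        rw [← zpow_natCast l 2, ← zpow_neg, ← zpow_add₀ hl.ne']
        congr 1
        push_cast
        ring
      have e3 : (-((n:ℤ)+2+((i:ℕ):ℤ))) = (-((n:ℤ)+2+((i:ℤ)))) := by push_cast; ring
      simp only [e1]
      push_cast
      calc cc n i * ω ^ i * (-((n:ℝ) + 1 + ↑i) * l ^ (-((n:ℤ) + 2 + i))) * iteratedDeriv i g (ω / l) +
            cc n i * ω ^ i * l ^ (-((n:ℤ) + 1 + ↑i)) * (iteratedDeriv (i + 1) g (ω / l) * (ω * -(l ^ 2)⁻¹))
          = -(((n:ℝ) + 1 + ↑i) * cc n i * (ω ^ i * l ^ (-((n:ℤ) + 2 + i)) * iteratedDeriv i g (ω / l)))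
            - cc n i * (ω ^ (i+1) * (l ^ (-((n:ℤ)+1+(i:ℤ))) * (l^2)⁻¹) * iteratedDeriv (i+1) g (ω / l)) := by
            ring
        _ = _ := by rw [e2]; push_cast; ring
    calc (-1:ℝ)^n * ∑ i ∈ Finset.range (n+1), D i
        = (-1:ℝ)^n * ∑ i ∈ Finset.range (n+1),
            -((((n:ℝ)+1+i) * cc n i * B i) + cc n i * B (i+1)) := by
          rw [Finset.sum_congr rfl fun i _ => hDi i]
      _ = (-1:ℝ)^(n+1) * ∑ i ∈ Finset.range (n+1),
            ((((n:ℝ)+1+i) * cc n i * B i) + cc n i * B (i+1)) := by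
          rw [Finset.sum_neg_distrib]; ring
      _ = (-1:ℝ)^(n+1) * ∑ i ∈ Finset.range (n+2), cc (n+1) i * B i := by
          rw [sum_step]
      _ = _ := by
          rw [hB]
          congr 1
          refine Finset.sum_congr rfl fun i _ => ?_
          push_cast
          ring

theorem stmt10 (ψ : ℝ → ℂ) (m : ℕ) (hψ : ContDiff ℝ m (powerSpec ψ))
    (hint : ∀ i ≤ m, Integrable (fun ω : ℝ => ω ^ i * iteratedDeriv i (powerSpec ψ) ω))
    (f : ℝ → ℝ) (hf : Integrable f) :
    ∀ l : ℝ, 0 < l →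
      |l ^ m * ((1 / (2 * Real.pi)) * ∫ ω : ℝ, ‖fourierT (fun x => (f x : ℂ)) ω‖ ^ 2 *
          iteratedDeriv m (fun s : ℝ => s⁻¹ * powerSpec ψ (ω / s)) l)|
        ≤ ((1 / (2 * Real.pi)) * ∑ i ∈ Finset.range (m + 1),
              (m.choose i : ℝ) * ((m.factorial : ℝ) / (i.factorial : ℝ)) *
                ∫ ω : ℝ, |ω ^ i * iteratedDeriv i (powerSpec ψ) ω|)
          * (∫ x : ℝ, |f x|) ^ 2 := by
  intro l hl
  have hl0 : l ≠ 0 := hl.ne'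
  set P : ℝ → ℝ := powerSpec ψ with hP
  set g : ℕ → ℝ → ℝ := fun i => iteratedDeriv i P with hg
  set N : ℝ := ∫ x : ℝ, |f x| with hN
  have hN0 : 0 ≤ N := integral_nonneg fun x => abs_nonneg _
  set C : ℝ := 1 / (2 * Real.pi) with hC
  have hC0 : 0 ≤ C := by
    rw [hC]; positivity
  set F : ℝ → ℝ := fun ω => ‖fourierT (fun x => (f x : ℂ)) ω‖ ^ 2 *
      iteratedDeriv m (fun s : ℝ => s⁻¹ * P (ω / s)) l with hF
  -- Fourier bound
  have hFb : ∀ ω : ℝ, ‖fourierT (fun x => (f x : ℂ)) ω‖ ≤ N := by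
    intro ω
    refine (norm_integral_le_integral_norm _).trans_eq ?_
    rw [hN]
    congr 1
    funext x
    rw [norm_mul]
    have h1 : ‖Complex.exp (-(Complex.I * (x:ℂ) * (ω:ℂ)))‖ = 1 := by
      rw [Complex.norm_exp]
      simp
    rw [h1, mul_one, Complex.norm_real, Real.norm_eq_abs]
  -- integrability of scaled kernels
  have hker : ∀ i ≤ m, Integrable (fun ω : ℝ => |ω ^ i * g i (ω / l)|) := by
    intro i hi
    have h1 : Integrable (fun ω : ℝ => (ω / l) ^ i * g i (ω / l)) :=
      (hint i hi).comp_div hl0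
    have h2 := h1.const_mul (l ^ i)
    have h3 : Integrable (fun ω : ℝ => ω ^ i * g i (ω / l)) := by
      refine h2.congr (Filter.Eventually.of_forall fun ω => ?_)
      simp only [div_pow]
      field_simp
    exact h3.abs
  -- value of scaled integral
  have hval : ∀ i : ℕ, (∫ ω : ℝ, |ω ^ i * g i (ω / l)|)
      = l ^ (i+1) * ∫ u : ℝ, |u ^ i * g i u| := by
    intro i
    have heq : (fun ω : ℝ => |ω ^ i * g i (ω / l)|)
        = fun ω : ℝ => (fun u : ℝ => |l ^ i * (u ^ i * g i u)|) (ω / l) := by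
      funext ω
      have : l ^ i * ((ω / l) ^ i * g i (ω / l)) = ω ^ i * g i (ω / l) := by
        rw [div_pow]
        field_simp
      simp only [this]
    rw [heq, MeasureTheory.Measure.integral_comp_div (fun u : ℝ => |l ^ i * (u ^ i * g i u)|) l]
    have : (fun u : ℝ => |l ^ i * (u ^ i * g i u)|) = fun u : ℝ => l ^ i * |u ^ i * g i u| := by
      funext u
      rw [abs_mul, _root_.abs_of_nonneg (pow_nonneg hl.le i)]
    rw [this, MeasureTheory.integral_const_mul, smul_eq_mul, _root_.abs_of_pos hl, pow_succ]
    ring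
  -- the dominating function
  set G : ℝ → ℝ := fun ω => N ^ 2 * ∑ i ∈ Finset.range (m+1),
      cc m i * l ^ (-((m:ℤ)+1+i)) * |ω ^ i * g i (ω / l)| with hG
  have hGint : Integrable G := by
    apply Integrable.const_mul
    apply integrable_finset_sum
    intro i hi
    exact (hker i (Nat.lt_succ_iff.mp (Finset.mem_range.mp hi))).const_mul _
  -- pointwise bound
  have hpt : ∀ ω : ℝ, |F ω| ≤ G ω := by
    intro ω
    rw [hF, hG]
    simp only
    rw [key P ω m hψ l hl, abs_mul]
    have h1 : |‖fourierT (fun x => (f x : ℂ)) ω‖ ^ 2| ≤ N ^ 2 := by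
      rw [_root_.abs_of_nonneg (sq_nonneg _)]
      exact pow_le_pow_left₀ (norm_nonneg _) (hFb ω) 2
    have h2 : |(-1:ℝ)^m * ∑ i ∈ Finset.range (m+1),
          cc m i * ω^i * l ^ (-((m:ℤ)+1+i)) * g i (ω / l)|
        ≤ ∑ i ∈ Finset.range (m+1), cc m i * l ^ (-((m:ℤ)+1+i)) * |ω ^ i * g i (ω / l)| := by
      rw [abs_mul, _root_.abs_pow, abs_neg, abs_one, one_pow, one_mul]
      refine (Finset.abs_sum_le_sum_abs _ _).trans ?_
      refine Finset.sum_le_sum fun i _ => le_of_eq ?_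
      rw [abs_mul, abs_mul, abs_mul, _root_.abs_of_nonneg (cc_nonneg m i),
        _root_.abs_of_pos (zpow_pos hl _), abs_mul]
      ring
    calc |‖fourierT (fun x => (f x : ℂ)) ω‖ ^ 2| * |(-1:ℝ)^m * ∑ i ∈ Finset.range (m+1),
            cc m i * ω^i * l ^ (-((m:ℤ)+1+i)) * g i (ω / l)|
        ≤ N ^ 2 * ∑ i ∈ Finset.range (m+1),
            cc m i * l ^ (-((m:ℤ)+1+i)) * |ω ^ i * g i (ω / l)| := by
          apply mul_le_mul h1 h2 (abs_nonneg _) (sq_nonneg N)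
      _ = _ := rfl
  -- integral bound
  have hIb : |∫ ω : ℝ, F ω| ≤ ∫ ω : ℝ, G ω := by
    refine le_trans ?_ (integral_mono_of_nonneg
      (Filter.Eventually.of_forall fun ω => abs_nonneg (F ω)) hGint
      (Filter.Eventually.of_forall hpt))
    simpa [Real.norm_eq_abs] using norm_integral_le_integral_norm (μ := volume) F
  -- value of ∫ G
  have hGval : ∫ ω : ℝ, G ω = N ^ 2 * ∑ i ∈ Finset.range (m+1),
      cc m i * l ^ (-((m:ℤ)+1+i)) * (l ^ (i+1) * ∫ u : ℝ, |u ^ i * g i u|) := by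
    rw [hG]
    rw [MeasureTheory.integral_const_mul]
    congr 1
    rw [MeasureTheory.integral_finset_sum _ (fun i hi =>
      (hker i (Nat.lt_succ_iff.mp (Finset.mem_range.mp hi))).const_mul _)]
    refine Finset.sum_congr rfl fun i _ => ?_
    rw [MeasureTheory.integral_const_mul, hval i]
  -- cancellation
  have hcanc : ∀ i : ℕ, l ^ m * (l ^ (-((m:ℤ)+1+i)) * l ^ (i+1)) = 1 := by
    intro i
    rw [← zpow_natCast l m, ← zpow_natCast l (i+1), ← zpow_add₀ hl0, ← zpow_add₀ hl0,
        ← zpow_zero l]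
    congr 1
    push_cast
    ring
  -- final computation
  have hfinal : l ^ m * (C * (N ^ 2 * ∑ i ∈ Finset.range (m+1),
        cc m i * l ^ (-((m:ℤ)+1+i)) * (l ^ (i+1) * ∫ u : ℝ, |u ^ i * g i u|)))
      = (C * ∑ i ∈ Finset.range (m + 1),
            (m.choose i : ℝ) * ((m.factorial : ℝ) / (i.factorial : ℝ)) *
              ∫ ω : ℝ, |ω ^ i * g i ω|) * N ^ 2 := by
    rw [Finset.mul_sum, Finset.mul_sum, Finset.mul_sum, Finset.mul_sum]
    have : ∀ i ∈ Finset.range (m+1),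
        l ^ m * (C * (N ^ 2 * (cc m i * l ^ (-((m:ℤ)+1+i)) * (l ^ (i+1) * ∫ u : ℝ, |u ^ i * g i u|))))
        = C * ((m.choose i : ℝ) * ((m.factorial : ℝ) / (i.factorial : ℝ)) *
              ∫ ω : ℝ, |ω ^ i * g i ω|) * N ^ 2 := by
      intro i _
      have h := hcanc i
      have hcc : (m.choose i : ℝ) * ((m.factorial : ℝ) / (i.factorial : ℝ)) = cc m i := by
        rw [cc, mul_div_assoc]
      rw [hcc]
      calc l ^ m * (C * (N ^ 2 * (cc m i * l ^ (-((m:ℤ)+1+i)) * (l ^ (i+1) * ∫ u : ℝ, |u ^ i * g i u|))))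
          = (l ^ m * (l ^ (-((m:ℤ)+1+i)) * l ^ (i+1))) *
              (C * (cc m i * ∫ u : ℝ, |u ^ i * g i u|) * N ^ 2) := by ring
        _ = _ := by rw [h]; ring
    rw [Finset.sum_congr rfl this, ← Finset.sum_mul]
  calc |l ^ m * (C * ∫ ω : ℝ, F ω)|
      = l ^ m * (C * |∫ ω : ℝ, F ω|) := by
        rw [abs_mul, abs_mul, _root_.abs_of_nonneg (pow_nonneg hl.le m),
          _root_.abs_of_nonneg hC0]
    _ ≤ l ^ m * (C * ∫ ω : ℝ, G ω) :=
        mul_le_mul_of_nonneg_left (mul_le_mul_of_nonneg_left hIb hC0) (pow_nonneg hl.le m)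
    _ = _ := by rw [hGval]; exact hfinal
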